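/- Let (M_n) be positive integers with M_{n+1} ≥ q·M_n for q > 1, let K, N, G be positive integers, and suppose integers l_H > l_{H+1} and |j_k| ≤ N^K (for k = 1,…,K) and signs δ_k ∈ {0,1} satisfy |Σ_{k=H+1}^{K} (−1)^{δ_k} j_k M_{l_k}| ≥ (1/2) M_{l_H} with l_{H+1} ≥ l_{H+2} ≥ … ≥ l_K. Then l_H − l_{H+1} ≤ log_q(2K) + K·log_q(N). -/

import Mathlib

open Real

/-- Gap-propagation estimate (equation (229)): if the tail of a lacunary signed sum is at
least `(1/2)·M_{l_H}`, then `l_H − l_{H+1} ≤ log_q(2K) + K·log_q(N)`. -/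
theorem stmt_19 (q : ℝ) (hq : 1 < q) (M : ℕ → ℕ) (hMpos : ∀ n, 0 < M n)
    (hlac : ∀ n, q * M n ≤ M (n + 1)) (K N G : ℕ) (hK : 1 ≤ K) (hN : 1 ≤ N) (hG : 1 ≤ G)
    (l : ℕ → ℕ) (j : ℕ → ℤ) (δ : ℕ → ℕ) (H : ℕ) (hH : H + 1 ≤ K)
    (hgap : l (H + 1) < l H)
    (hmono : ∀ k, H + 1 ≤ k → k < K → l (k + 1) ≤ l k)
    (hj : ∀ k, 1 ≤ k → k ≤ K → |j k| ≤ (N : ℤ) ^ K)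
    (hδ : ∀ k, δ k ≤ 1)
    (htail : (1 / 2 : ℝ) * M (l H) ≤
      |∑ k ∈ Finset.Icc (H + 1) K, (-1 : ℝ) ^ δ k * (j k : ℝ) * M (l k)|) :
    (l H : ℝ) - l (H + 1) ≤ Real.logb q (2 * K) + K * Real.logb q N := by
  have hq0 : (0:ℝ) < q := lt_trans one_pos hq
  -- M is monotone with geometric growth
  have hgrow : ∀ a b : ℕ, a ≤ b → q ^ (b - a) * (M a : ℝ) ≤ M b := by
    intro a b hab
    induction b with
    | zero => simp [Nat.le_zero.mp hab]
    | succ b ih =>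
      rcases Nat.lt_or_ge a (b+1) with h | h
      · have hab' : a ≤ b := Nat.lt_succ_iff.mp h
        have : b + 1 - a = (b - a) + 1 := by omega
        rw [this, pow_succ]
        have h1 : q ^ (b - a) * (M a : ℝ) * q ≤ (M b : ℝ) * q := by
          exact mul_le_mul_of_nonneg_right (ih hab') (le_of_lt hq0)
        calc q ^ (b - a) * q * (M a : ℝ) = q ^ (b - a) * (M a : ℝ) * q := by ring
          _ ≤ (M b : ℝ) * q := h1
          _ = q * (M b : ℝ) := by ring
          _ ≤ M (b+1) := hlac b
      · have : a = b + 1 := le_antisymm hab h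
        simp [this]
  -- l k ≤ l (H+1) for k in the tail
  have hldec : ∀ k, H + 1 ≤ k → k ≤ K → l k ≤ l (H + 1) := by
    intro k hk1 hk2
    induction k with
    | zero => omega
    | succ k ih =>
      rcases Nat.lt_or_ge (H+1) (k+1) with h | h
      · have hk : H + 1 ≤ k := by omega
        exact le_trans (hmono k hk (by omega)) (ih hk (by omega))
      · have : H + 1 = k + 1 := le_antisymm hk1 h
        rw [← this]
  -- bound each term
  have hM1pos : (0:ℝ) < M (l (H+1)) := by exact_mod_cast hMpos _
  have hterm : ∀ k ∈ Finset.Icc (H+1) K,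
      |(-1 : ℝ) ^ δ k * (j k : ℝ) * M (l k)| ≤ (N:ℝ)^K * M (l (H+1)) := by
    intro k hk
    rw [Finset.mem_Icc] at hk
    have hjk : |(j k : ℝ)| ≤ (N:ℝ)^K := by
      have := hj k (by omega) hk.2
      have : |((j k : ℤ) : ℝ)| ≤ (((N:ℤ)^K : ℤ) : ℝ) := by exact_mod_cast this
      simpa using this
    have hMk : (M (l k) : ℝ) ≤ M (l (H+1)) := by
      have hle := hldec k hk.1 hk.2
      have : (1:ℝ) * M (l k) ≤ q ^ (l (H+1) - l k) * M (l k) := by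
        apply mul_le_mul_of_nonneg_right _ (by positivity)
        exact one_le_pow₀ (le_of_lt hq)
      calc (M (l k) : ℝ) = 1 * M (l k) := by ring
        _ ≤ q ^ (l (H+1) - l k) * M (l k) := this
        _ ≤ M (l (H+1)) := hgrow _ _ hle
    rw [abs_mul, abs_mul]
    have h1 : |(-1 : ℝ) ^ δ k| = 1 := by
      rw [abs_pow, abs_neg, abs_one, one_pow]
    rw [h1, one_mul]
    have hMk0 : (0:ℝ) ≤ M (l k) := by positivity
    calc |(j k : ℝ)| * |(M (l k) : ℝ)| = |(j k : ℝ)| * M (l k) := by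
          rw [abs_of_nonneg hMk0]
      _ ≤ (N:ℝ)^K * M (l (H+1)) := by
          apply mul_le_mul hjk hMk hMk0 (by positivity)
  -- sum bound
  have hsum : |∑ k ∈ Finset.Icc (H + 1) K, (-1 : ℝ) ^ δ k * (j k : ℝ) * M (l k)|
      ≤ (K:ℝ) * ((N:ℝ)^K * M (l (H+1))) := by
    calc |∑ k ∈ Finset.Icc (H + 1) K, (-1 : ℝ) ^ δ k * (j k : ℝ) * M (l k)|
        ≤ ∑ k ∈ Finset.Icc (H + 1) K, |(-1 : ℝ) ^ δ k * (j k : ℝ) * M (l k)| :=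
          Finset.abs_sum_le_sum_abs _ _
      _ ≤ ∑ k ∈ Finset.Icc (H + 1) K, (N:ℝ)^K * M (l (H+1)) :=
          Finset.sum_le_sum hterm
      _ = ((Finset.Icc (H+1) K).card : ℝ) * ((N:ℝ)^K * M (l (H+1))) := by
          rw [Finset.sum_const, nsmul_eq_mul]
      _ ≤ (K:ℝ) * ((N:ℝ)^K * M (l (H+1))) := by
          apply mul_le_mul_of_nonneg_right _ (by positivity)
          rw [Nat.card_Icc]
          exact_mod_cast Nat.le_of_lt_succ (by omega : K + 1 - (H+1) < K + 1)
  set d := l H - l (H + 1) with hd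
  have hgeo : q ^ d * (M (l (H+1)) : ℝ) ≤ M (l H) := hgrow _ _ (le_of_lt hgap)
  have hqd : q ^ d ≤ 2 * K * (N:ℝ)^K := by
    have h1 : (1/2 : ℝ) * (q ^ d * M (l (H+1))) ≤ (K:ℝ) * ((N:ℝ)^K * M (l (H+1))) := by
      calc (1/2 : ℝ) * (q ^ d * M (l (H+1))) ≤ (1/2 : ℝ) * M (l H) := by
            apply mul_le_mul_of_nonneg_left hgeo (by norm_num)
        _ ≤ _ := le_trans htail hsum
    have h2 : (1/2 : ℝ) * q ^ d * M (l (H+1)) ≤ ((K:ℝ) * (N:ℝ)^K) * M (l (H+1)) := by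
      linarith [h1]
    have := (mul_le_mul_iff_of_pos_right hM1pos).mp h2
    linarith
  -- take logs
  have hcast : (l H : ℝ) - l (H+1) = (d : ℝ) := by
    rw [hd]
    rw [Nat.cast_sub (le_of_lt hgap)]
  rw [hcast]
  have hlog : (d:ℝ) = Real.logb q (q ^ d) := by
    rw [Real.logb_pow, Real.logb_self_eq_one hq]
    ring
  rw [hlog]
  have h2K : (0:ℝ) < 2 * K := by positivity
  calc Real.logb q (q ^ d) ≤ Real.logb q (2 * K * (N:ℝ)^K) := by
        exact Real.logb_le_logb_of_le hq (by positivity) hqd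
      _ = Real.logb q (2 * K) + K * Real.logb q N := by
        rw [Real.logb_mul (ne_of_gt h2K) (by positivity), Real.logb_pow]
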